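/- Let A and B be nonempty, disjoint, closed subsets of the Euclidean plane ℝ². Then the Hausdorff dimension of the equidistant set E(A,B) is exactly 1. -/

import Mathlib

open Metric Set MeasureTheory
open RealInnerProductSpace
open scoped ENNReal NNReal

/-- The equidistant set determined by two subsets of a metric space. -/
def equidistantSet {X : Type*} [MetricSpace X] (A B : Set X) : Set X :=
  {x | Metric.infDist x A = Metric.infDist x B}

local notation "Pl" => EuclideanSpace ℝ (Fin 2)

noncomputable def rot (w : Pl) : Pl :=
  (WithLp.equiv 2 (Fin 2 → ℝ)).symm ![-(w 1), w 0]

lemma inner_two (x y : Pl) : ⟪x, y⟫ = x 0 * y 0 + x 1 * y 1 := by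
  simp [PiLp.inner_apply, Fin.sum_univ_two, RCLike.inner_apply, conj_trivial]; ring

lemma rot_apply0 (w : Pl) : rot w 0 = -(w 1) := rfl
lemma rot_apply1 (w : Pl) : rot w 1 = w 0 := rfl

lemma norm_sq_two (x : Pl) : ‖x‖^2 = x 0^2 + x 1^2 := by
  rw [← real_inner_self_eq_norm_sq, inner_two]; ring

lemma lagrange (z e : Pl) :
    ⟪z, e⟫^2 + ⟪z, rot e⟫^2 = ‖z‖^2 * ‖e‖^2 := by
  rw [inner_two, inner_two, norm_sq_two, norm_sq_two, rot_apply0, rot_apply1]; ring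

lemma rot_norm (e : Pl) : ‖rot e‖ = ‖e‖ := by
  have h : ‖rot e‖^2 = ‖e‖^2 := by
    rw [norm_sq_two, norm_sq_two, rot_apply0, rot_apply1]; ring
  have h2 := congrArg Real.sqrt h
  rwa [Real.sqrt_sq (norm_nonneg _), Real.sqrt_sq (norm_nonneg _)] at h2

lemma rot_orth (e : Pl) : ⟪e, rot e⟫ = 0 := by
  rw [inner_two, rot_apply0, rot_apply1]; ring

set_option maxHeartbeats 4000000 in
lemma scalar_contra {r d t I q J ρ ε R : ℝ}
    (hrpos : 0 < r) (hd : 0 < d) (hd2 : 2*d ≤ r) (ht : r ≤ t)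
    (hrR : r ≤ R) (hε : 0 < ε) (hε5 : ε ≤ 1/5) (hρpos : 0 < ρ)
    (hIdr : I ≤ d*r) (hqrt : q ≤ r*t) (hIlow : (1-ε^2)*(d*r) ≤ I)
    (hi : t^2 - 2*J ≤ r^2 - 2*I)
    (hii : r^2*J ≤ I*q + (3/2)*(r^2*d*ε)*t)
    (hab : ρ^2 ≤ r^2 - 2*q + t^2)
    (hsmall : 50*R^2*ε < ρ^2) : False := by
  have htpos : (0:ℝ) < t := lt_of_lt_of_le hrpos ht
  have he1 : (0:ℝ) < 1 - ε^2 := by nlinarith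
  have hdr : (0:ℝ) < d * r := mul_pos hd hrpos
  have hIpos : 0 < I := lt_of_lt_of_le (mul_pos he1 hdr) hIlow
  -- Step 1 : t ≤ 3 r
  have hs1 : t ≤ 3 * r := by
    have hIq : I * q ≤ d * r * (r * t) := by
      have h1 : I * q ≤ I * (r * t) := mul_le_mul_of_nonneg_left hqrt (le_of_lt hIpos)
      have h2 : I * (r * t) ≤ d * r * (r * t) :=
        mul_le_mul_of_nonneg_right hIdr (by positivity)
      linarith
    have h3 : r^2 * t^2 ≤ r^2 * r^2 + 2 * (d * r * (r*t)) + 3 * (r^2 * d * ε) * t := by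
      nlinarith [mul_le_mul_of_nonneg_left hi (le_of_lt (by positivity : (0:ℝ) < r^2))]
    have h4 : t^2 ≤ r^2 + 2 * d * t + 3 * d * ε * t := by
      have h5 : r^2 * (t^2) ≤ r^2 * (r^2 + 2*d*t + 3*d*ε*t) := by nlinarith
      exact (mul_le_mul_iff_right₀ (by positivity : (0:ℝ) < r^2)).mp h5
    have hdt : d * t ≤ r * t / 2 := by nlinarith
    have hedt : ε * (d * t) ≤ (1/5) * (d * t) :=
      mul_le_mul_of_nonneg_right hε5 (by positivity)
    have h6 : t^2 ≤ r^2 + (13/10) * (r * t) := by nlinarith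
    by_contra hcon
    push_neg at hcon
    have hA : 3*r*t < t^2 := by nlinarith [mul_lt_mul_of_pos_right hcon htpos]
    have hB : r*r ≤ r*t := mul_le_mul_of_nonneg_left ht (le_of_lt hrpos)
    nlinarith
  -- Step 2 : q ≥ r² (1 - 5 ε)
  have hs2 : r^2 * (1 - 5*ε) ≤ q := by
    have hrt2 : r^2 ≤ t^2 := by nlinarith
    have hJI : I ≤ J := by linarith
    have hc : (0:ℝ) ≤ (3/2)*(r^2*d*ε) := by positivity
    have h1 : (3/2)*(r^2*d*ε)*t ≤ (3/2)*(r^2*d*ε)*(3*r) := mul_le_mul_of_nonneg_left hs1 hc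
    have h2 : r^2*I ≤ r^2*J := mul_le_mul_of_nonneg_left hJI (by positivity)
    have hIq2 : r^2*I - (9/2)*(r^2*r*d*ε) ≤ I*q := by nlinarith
    by_contra hcon
    push_neg at hcon
    have h5 : I * q < I * (r^2 * (1 - 5*ε)) := mul_lt_mul_of_pos_left hcon hIpos
    have h6 : 5*ε*I*r^2 < (9/2)*(r^2*r*d*ε) := by nlinarith
    have h7 : 5*ε*((1-ε^2)*(d*r))*r^2 ≤ 5*ε*I*r^2 := by
      have := mul_le_mul_of_nonneg_left hIlow (by positivity : (0:ℝ) ≤ 5*ε)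
      nlinarith [sq_nonneg r]
    have hX : (0:ℝ) < ε*d*(r*r*r) := by positivity
    have he2 : ε^2 ≤ 1/25 := by nlinarith
    nlinarith [mul_le_mul_of_nonneg_right he2 (le_of_lt hX)]
  -- Step 3 : t ≤ r + 4.5 r ε
  have hs3 : t ≤ r + (9/2) * r * ε := by
    have hIg : I * (q - r^2) ≤ d * r * (r * (t - r)) := by
      rcases le_or_gt (r^2) q with hq1 | hq1
      · have h1 : I * (q - r^2) ≤ (d*r) * (q - r^2) :=
          mul_le_mul_of_nonneg_right hIdr (by linarith)
        have h2 : q - r^2 ≤ r * (t - r) := by nlinarith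
        nlinarith
      · have h1 : I * (q - r^2) ≤ 0 :=
          mul_nonpos_of_nonneg_of_nonpos (le_of_lt hIpos) (by linarith)
        have h2 : 0 ≤ d * r * (r * (t - r)) := by
          apply mul_nonneg (by positivity)
          exact mul_nonneg (le_of_lt hrpos) (by linarith)
        linarith
    have h7 : J - I ≤ d * (t - r) + (3/2) * (d * ε) * t := by
      have h6 : r^2 * (J - I) ≤ r^2 * (d * (t - r) + (3/2) * (d * ε) * t) := by nlinarith
      exact le_of_mul_le_mul_left (by linarith) (by positivity : (0:ℝ) < r^2)
    have h8 : (t - r) * (t + r - 2*d) ≤ 3 * (d * (ε * t)) := by nlinarith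
    have h9 : (t - r) * r ≤ (t - r) * (t + r - 2*d) := by
      apply mul_le_mul_of_nonneg_left _ (by linarith : (0:ℝ) ≤ t - r)
      linarith
    have h10 : d * (ε * t) ≤ (r/2) * (ε * (3*r)) := by
      have ha : ε * t ≤ ε * (3*r) := mul_le_mul_of_nonneg_left hs1 (le_of_lt hε)
      have hb : d * (ε * t) ≤ (r/2) * (ε * t) :=
        mul_le_mul_of_nonneg_right (by linarith) (by positivity)
      have hc : (r/2) * (ε * t) ≤ (r/2) * (ε * (3*r)) :=
        mul_le_mul_of_nonneg_left ha (by positivity)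
      linarith
    have h11 : (t - r) * r ≤ (9/2) * (r * ε) * r := by nlinarith
    have := le_of_mul_le_mul_right (by nlinarith : (t - r) * r ≤ ((9/2) * r * ε) * r) hrpos
    linarith
  -- Final contradiction
  have hr2R : r^2 ≤ R^2 := pow_le_pow_left₀ (le_of_lt hrpos) hrR 2
  have ht2 : t^2 ≤ (r + (9/2)*r*ε)^2 :=
    pow_le_pow_left₀ (le_of_lt htpos) hs3 2
  have heps2 : ε^2 ≤ ε/5 := by nlinarith
  have hcore : ρ^2 ≤ 24 * (r^2 * ε) := by
    nlinarith [mul_le_mul_of_nonneg_left heps2 (sq_nonneg r)]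
  have hlast : r^2 * ε ≤ R^2 * ε := mul_le_mul_of_nonneg_right hr2R (le_of_lt hε)
  have hRpos : (0:ℝ) < R := lt_of_lt_of_le hrpos hrR
  have hR2e : (0:ℝ) < R^2 * ε := mul_pos (pow_pos hRpos 2) hε
  linarith


lemma expand_sq (Y Av : Pl) (c1 c2 : ℝ) :
    ‖c1 • Y - c2 • Av‖^2 = c1^2 * ‖Y‖^2 - 2*(c1*c2)*⟪Y, Av⟫ + c2^2 * ‖Av‖^2 := by
  have h := real_inner_self_eq_norm_sq (c1 • Y - c2 • Av)
  simp only [inner_sub_left, inner_sub_right, real_inner_smul_left, real_inner_smul_right] at h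
  rw [← h, real_inner_self_eq_norm_sq, real_inner_self_eq_norm_sq, real_inner_comm Av Y]
  ring

set_option maxHeartbeats 1600000 in
lemma excl {A B : Set Pl} (hBc : IsClosed B) (hB : B.Nonempty)
    {x y a : Pl} (haA : a ∈ A)
    (hxB : infDist x B = dist x a)
    (hyE : infDist y A = infDist y B)
    {ρ ε R : ℝ} (hρpos : 0 < ρ) (hρ : ∀ b ∈ B, ρ ≤ dist a b)
    (hε : 0 < ε) (hε5 : ε ≤ 1/5)
    (hrR : dist x a ≤ R)
    (hd : 0 < dist x y) (hd2 : 2 * dist x y ≤ dist x a)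
    (hang : (1 - ε^2) * (dist x y * dist x a) ≤ ⟪y - x, a - x⟫)
    (hsmall : 50 * R^2 * ε < ρ^2) : False := by
  obtain ⟨b, hbB, hbd⟩ := hBc.exists_infDist_eq_dist hB y
  have hra : dist x a = ‖a - x‖ := by rw [dist_eq_norm, norm_sub_rev]
  have hdxy : dist x y = ‖y - x‖ := by rw [dist_eq_norm, norm_sub_rev]
  rw [hra] at hxB hrR hd2
  rw [hdxy] at hd hd2
  rw [hra, hdxy] at hang
  have hdpos : (0:ℝ) < ‖y - x‖ := hd
  have hrpos : (0:ℝ) < ‖a - x‖ := lt_of_lt_of_le (by linarith) hd2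
  -- t ≥ r
  have ht : ‖a - x‖ ≤ ‖b - x‖ := by
    have h1 : infDist x B ≤ dist x b := infDist_le_dist_of_mem hbB
    rwa [hxB, dist_eq_norm, norm_sub_rev x b] at h1
  -- dist y b ≤ dist y a
  have hyb : ‖y - b‖ ≤ ‖y - a‖ := by
    rw [← dist_eq_norm, ← dist_eq_norm, ← hbd, ← hyE]
    exact infDist_le_dist_of_mem haA
  -- inequality (i)
  have hi : ‖b - x‖^2 - 2*⟪y - x, b - x⟫ ≤ ‖a - x‖^2 - 2*⟪y - x, a - x⟫ := by
    have e1 : ‖y - b‖^2 = ‖y - x‖^2 - 2*⟪y - x, b - x⟫ + ‖b - x‖^2 := by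
      have : y - b = (y - x) - (b - x) := by abel
      rw [this, norm_sub_sq_real]
    have e2 : ‖y - a‖^2 = ‖y - x‖^2 - 2*⟪y - x, a - x⟫ + ‖a - x‖^2 := by
      have : y - a = (y - x) - (a - x) := by abel
      rw [this, norm_sub_sq_real]
    have h1 : ‖y - b‖^2 ≤ ‖y - a‖^2 := pow_le_pow_left₀ (norm_nonneg _) hyb 2
    rw [e1, e2] at h1
    linarith
  -- Cauchy-Schwarz facts
  have hIdr : ⟪y - x, a - x⟫ ≤ ‖y - x‖ * ‖a - x‖ := real_inner_le_norm _ _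
  have hqrt : ⟪a - x, b - x⟫ ≤ ‖a - x‖ * ‖b - x‖ := real_inner_le_norm _ _
  have he2 : ε^2 ≤ 1/25 := by nlinarith
  have he2' := mul_le_mul_of_nonneg_right he2 (le_of_lt (mul_pos hdpos hrpos))
  have hIpos : 0 < ⟪y - x, a - x⟫ := by nlinarith [hang, mul_pos hdpos hrpos]
  -- inequality (ii)
  have hii : ‖a - x‖^2 * ⟪y - x, b - x⟫ ≤
      ⟪y - x, a - x⟫ * ⟪a - x, b - x⟫ + (3/2)*(‖a - x‖^2 * ‖y - x‖ * ε) * ‖b - x‖ := by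
    set Z := (‖a - x‖^2) • (y - x) - (⟪y - x, a - x⟫) • (a - x) with hZdef
    have hZsq : ‖Z‖^2 = ‖a - x‖^4 * ‖y - x‖^2 - ‖a - x‖^2 * ⟪y - x, a - x⟫^2 := by
      rw [hZdef, expand_sq]; ring
    have hZb : ‖Z‖^2 ≤ ((3/2)*(‖a - x‖^2 * ‖y - x‖ * ε))^2 := by
      rw [hZsq]
      have he1 : (0:ℝ) ≤ 1 - ε^2 := by nlinarith
      have h0 : (0:ℝ) ≤ (1-ε^2)*(‖y - x‖*‖a - x‖) := mul_nonneg he1 (by positivity)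
      have hI2 : ((1-ε^2)*(‖y - x‖*‖a - x‖))^2 ≤ ⟪y - x, a - x⟫^2 := by nlinarith [hang]
      have hI3 := mul_le_mul_of_nonneg_left hI2 (sq_nonneg ‖a - x‖)
      nlinarith [hI3, sq_nonneg (‖a - x‖^2*‖y - x‖*ε), sq_nonneg (‖a - x‖^2*‖y - x‖*(ε*ε))]
    have hZn : ‖Z‖ ≤ (3/2)*(‖a - x‖^2 * ‖y - x‖ * ε) := by
      have h0 : (0:ℝ) ≤ (3/2)*(‖a - x‖^2 * ‖y - x‖ * ε) := by positivity
      exact le_of_pow_le_pow_left₀ two_ne_zero h0 hZb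
    have hcs : ⟪Z, b - x⟫ ≤ ‖Z‖ * ‖b - x‖ := real_inner_le_norm _ _
    have hexp : ⟪Z, b - x⟫ = ‖a - x‖^2 * ⟪y - x, b - x⟫ - ⟪y - x, a - x⟫ * ⟪a - x, b - x⟫ := by
      rw [hZdef, inner_sub_left, real_inner_smul_left, real_inner_smul_left]
    have h2 : ‖Z‖ * ‖b - x‖ ≤ (3/2)*(‖a - x‖^2 * ‖y - x‖ * ε) * ‖b - x‖ :=
      mul_le_mul_of_nonneg_right hZn (norm_nonneg _)
    linarith
  -- contradiction via nearest point b and the scalar lemma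
  have hab : ρ ≤ dist a b := hρ b hbB
  have habsq : ρ^2 ≤ ‖a - x‖^2 - 2*⟪a - x, b - x⟫ + ‖b - x‖^2 := by
    have h1 : ρ^2 ≤ (dist a b)^2 := pow_le_pow_left₀ (le_of_lt hρpos) hab 2
    have h2 : (dist a b)^2 = ‖a - x‖^2 - 2*⟪a - x, b - x⟫ + ‖b - x‖^2 := by
      rw [dist_eq_norm]
      have : a - b = (a - x) - (b - x) := by abel
      rw [this, norm_sub_sq_real]
    linarith
  exact scalar_contra hrpos hdpos hd2 ht hrR hε hε5 hρpos hIdr hqrt hang hi hii habsq hsmall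

noncomputable def epsn (m : ℕ) : ℝ := 1/(100*(m+1)^4)
noncomputable def zetan (m : ℕ) : ℝ := (epsn m)^2/(16*(m+1))

lemma epsn_pos (m : ℕ) : 0 < epsn m := by unfold epsn; positivity
lemma zetan_pos (m : ℕ) : 0 < zetan m := by unfold zetan epsn; positivity
lemma epsn_le (m : ℕ) : epsn m ≤ 1/100 := by
  unfold epsn
  rw [div_le_div_iff₀ (by positivity) (by norm_num)]
  have : (1:ℝ) ≤ (m+1)^4 := one_le_pow₀ (by exact_mod_cast Nat.le_add_left 1 m)
  nlinarith

lemma zetan_val (m : ℕ) : zetan m * (16*(m+1)) = (epsn m)^2 := by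
  unfold zetan; field_simp

/-- The pieces of the equidistant set. -/
def piece (A B : Set Pl) (m : ℕ) (c c' : Pl) : Set Pl :=
  {x | ∃ a ∈ A, infDist x A = dist x a ∧ infDist x B = dist x a ∧
    1/(m+1) ≤ dist x a ∧ dist x a ≤ m+1 ∧ (∀ b ∈ B, 1/(m+1) ≤ dist a b) ∧
    dist x c < zetan m ∧ dist a c' < zetan m}

set_option maxHeartbeats 1000000 in
/-- one-sided chord exclusion at a point of a piece -/
lemma chord_half {A B : Set Pl} (hBc : IsClosed B) (hB : B.Nonempty)
    {m : ℕ} {c c' : Pl} {x y : Pl} (hx : x ∈ piece A B m c c')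
    (hyE : infDist y A = infDist y B)
    (hne : x ≠ y) (hclose : dist x y < 2 * zetan m)
    (hang : (1 - (epsn m)^2/2) * (dist x y * ‖c' - c‖) ≤ ⟪y - x, c' - c⟫) : False := by
  obtain ⟨a, haA, hxA, hxB, hrlow, hrhigh, hρ, hxc, hac'⟩ := hx
  have hεpos := epsn_pos m
  have hεle := epsn_le m
  have hζpos := zetan_pos m
  have hζval := zetan_val m
  have hm1 : (1:ℝ) ≤ m+1 := by exact_mod_cast Nat.le_add_left 1 m
  have hm0 : (0:ℝ) < m+1 := by linarith
  have hε2 : (epsn m)^2 ≤ 1 := by nlinarith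
  have hrpos : (0:ℝ) < dist x a := lt_of_lt_of_le (by positivity) hrlow
  have hdpos : 0 < dist x y := dist_pos.mpr hne
  have hrlow' : 1 ≤ (m+1) * dist x a := by
    rw [div_le_iff₀ hm0] at hrlow
    linarith
  have h16 : 16 * zetan m ≤ dist x a := by nlinarith
  -- the error vector is small
  have herr2 : ‖(a - x) - (c' - c)‖ < 2 * zetan m := by
    have h1 : (a - x) - (c' - c) = (a - c') - (x - c) := by abel
    rw [h1]
    have e1 : ‖a - c'‖ = dist a c' := (dist_eq_norm _ _).symm
    have e2 : ‖x - c‖ = dist x c := (dist_eq_norm _ _).symm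
    have h2 := norm_sub_le (a - c') (x - c)
    linarith
  have hee : dist x a - 2 * zetan m ≤ ‖c' - c‖ := by
    have h1 : ‖a - x‖ ≤ ‖c' - c‖ + ‖(a - x) - (c' - c)‖ := by
      calc ‖a - x‖ = ‖(c' - c) + ((a - x) - (c' - c))‖ := by congr 1; abel
      _ ≤ _ := norm_add_le _ _
    have h2 : dist x a = ‖a - x‖ := by rw [dist_eq_norm, norm_sub_rev]
    linarith
  -- 2 dist x y ≤ dist x a
  have hd2 : 2 * dist x y ≤ dist x a := by linarith
  -- angle transfer
  have hang2 : (1 - (epsn m)^2) * (dist x y * dist x a) ≤ ⟪y - x, a - x⟫ := by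
    have hsplit : ⟪y - x, a - x⟫ = ⟪y - x, c' - c⟫ + ⟪y - x, (a - x) - (c' - c)⟫ := by
      rw [← inner_add_right]; congr 1; abel
    have hcs : -(dist x y * (2 * zetan m)) ≤ ⟪y - x, (a - x) - (c' - c)⟫ := by
      have h2 := abs_real_inner_le_norm (y - x) ((a - x) - (c' - c))
      have h3 : ‖y - x‖ = dist x y := by rw [dist_eq_norm, norm_sub_rev]
      rw [h3] at h2
      have h5 := neg_abs_le ⟪y - x, (a - x) - (c' - c)⟫
      nlinarith [dist_nonneg (x := x) (y := y)]
    have hθ1 : (0:ℝ) ≤ 1 - (epsn m)^2/2 := by nlinarith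
    have hlhs : (1 - (epsn m)^2/2) * (dist x y * (dist x a - 2*zetan m)) ≤
        (1 - (epsn m)^2/2) * (dist x y * ‖c' - c‖) := by
      apply mul_le_mul_of_nonneg_left _ hθ1
      exact mul_le_mul_of_nonneg_left hee dist_nonneg
    -- scalar core : (1-ε²)(d r) ≤ (1-ε²/2) d (r-2ζ) - 2ζ d
    have hkey : 4 * zetan m ≤ ((epsn m)^2/2) * dist x a := by
      have h1 : zetan m * 1 ≤ zetan m * ((m+1) * dist x a) :=
        mul_le_mul_of_nonneg_left hrlow' hζpos.le
      nlinarith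
    have hcore : (1 - (epsn m)^2) * (dist x y * dist x a) ≤
        (1 - (epsn m)^2/2) * (dist x y * (dist x a - 2*zetan m))
          - dist x y * (2 * zetan m) := by
      have h6 : 0 ≤ dist x y := dist_nonneg
      nlinarith [mul_le_mul_of_nonneg_left hkey h6,
        mul_nonneg (mul_nonneg hζpos.le h6) (sq_nonneg (epsn m))]
    linarith [hsplit, hang, hlhs, hcs]
  -- apply the exclusion lemma
  have hsmall : 50 * ((m:ℝ)+1)^2 * epsn m < (1/((m:ℝ)+1))^2 := by
    have he : 50 * ((m:ℝ)+1)^2 * epsn m = 1/(2*(((m:ℝ)+1)^2)) := by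
      unfold epsn; field_simp; ring
    rw [he, div_pow, one_pow, div_lt_div_iff₀ (by positivity) (pow_pos hm0 2)]
    nlinarith [pow_pos hm0 2]
  exact excl hBc hB haA hxB hyE (by positivity : (0:ℝ) < 1/(m+1)) hρ hεpos
    (le_trans hεle (by norm_num)) hrhigh hdpos hd2 hang2 hsmall

lemma dimH_le_one_of_antilip {S : Set Pl} (f : Pl → ℝ) (K : NNReal)
    (h : ∀ x ∈ S, ∀ y ∈ S, dist x y ≤ K * dist (f x) (f y)) : dimH S ≤ 1 := by
  classical
  set g := Function.invFunOn f S with hg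
  have hSg : S ⊆ g '' (f '' S) := by
    intro x hx
    have h1 : g (f x) ∈ S := Function.invFunOn_mem ⟨x, hx, rfl⟩
    have h2 : f (g (f x)) = f x := Function.invFunOn_apply_eq hx
    have h3 : dist x (g (f x)) ≤ K * dist (f x) (f (g (f x))) := h x hx _ h1
    rw [h2, dist_self, mul_zero] at h3
    have h4 : x = g (f x) := dist_le_zero.mp h3
    exact ⟨f x, mem_image_of_mem f hx, h4.symm⟩
  have hgl : LipschitzOnWith K g (f '' S) := by
    rw [lipschitzOnWith_iff_dist_le_mul]
    rintro u ⟨xu, hxu, rfl⟩ w ⟨xw, hxw, rfl⟩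
    have hu : g (f xu) ∈ S := Function.invFunOn_mem ⟨xu, hxu, rfl⟩
    have hw : g (f xw) ∈ S := Function.invFunOn_mem ⟨xw, hxw, rfl⟩
    have h5 := h _ hu _ hw
    rw [show f (g (f xu)) = f xu from Function.invFunOn_apply_eq hxu,
      show f (g (f xw)) = f xw from Function.invFunOn_apply_eq hxw] at h5
    exact h5
  calc dimH S ≤ dimH (g '' (f '' S)) := dimH_mono hSg
  _ ≤ dimH (f '' S) := hgl.dimH_image_le
  _ ≤ dimH (univ : Set ℝ) := dimH_mono (subset_univ _)
  _ = 1 := Real.dimH_univ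

set_option maxHeartbeats 1000000 in
lemma piece_chord {A B : Set Pl} (hBc : IsClosed B) (hB : B.Nonempty)
    (m : ℕ) (c c' : Pl) {x y : Pl}
    (hx : x ∈ piece A B m c c') (hy : y ∈ piece A B m c c') :
    dist x y ≤ (4*(m+1)/(epsn m)^2) * |⟪x - y, rot (c' - c)⟫| := by
  have hεpos := epsn_pos m
  have hm1 : (1:ℝ) ≤ m+1 := by exact_mod_cast Nat.le_add_left 1 m
  have hm0 : (0:ℝ) < m+1 := by linarith
  have hKpos : (0:ℝ) ≤ 4*(m+1)/(epsn m)^2 := by positivity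
  rcases eq_or_ne x y with rfl | hne
  · simp
  have hdpos : 0 < dist x y := dist_pos.mpr hne
  have hζpos := zetan_pos m
  have hζval := zetan_val m
  have hεle := epsn_le m
  have hε2 : (epsn m)^2 ≤ 1 := by nlinarith
  -- extract data
  have hyE : infDist y A = infDist y B := by
    obtain ⟨a, -, h1, h2, -⟩ := hy; rw [h1, h2]
  have hxE : infDist x A = infDist x B := by
    obtain ⟨a, -, h1, h2, -⟩ := hx; rw [h1, h2]
  have hclose : dist x y < 2 * zetan m := by
    obtain ⟨a, -, -, -, -, -, -, h1, -⟩ := hx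
    obtain ⟨a', -, -, -, -, -, -, h2, -⟩ := hy
    calc dist x y ≤ dist x c + dist y c := dist_triangle_right x y c
    _ < 2 * zetan m := by linarith
  -- the two cone exclusions
  have h1 : ¬ ((1 - (epsn m)^2/2) * (dist x y * ‖c' - c‖) ≤ ⟪y - x, c' - c⟫) :=
    fun h => chord_half hBc hB hx hyE hne hclose h
  have h2 : ¬ ((1 - (epsn m)^2/2) * (dist y x * ‖c' - c‖) ≤ ⟪x - y, c' - c⟫) :=
    fun h => chord_half hBc hB hy hxE hne.symm (by rwa [dist_comm]) h
  push_neg at h1 h2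
  rw [dist_comm y x] at h2
  have hflip : ⟪x - y, c' - c⟫ = -⟪y - x, c' - c⟫ := by
    rw [← neg_sub y x, inner_neg_left]
  rw [hflip] at h2
  have habs : |⟪y - x, c' - c⟫| < (1 - (epsn m)^2/2) * (dist x y * ‖c' - c‖) := by
    rw [abs_lt]; constructor <;> linarith
  -- lower bound on ‖c' - c‖
  have hee : 1/(2*((m:ℝ)+1)) ≤ ‖c' - c‖ := by
    obtain ⟨a, -, -, -, hrlow, -, -, hxc, hac'⟩ := hx
    have herr2 : ‖(a - x) - (c' - c)‖ < 2 * zetan m := by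
      have he0 : (a - x) - (c' - c) = (a - c') - (x - c) := by abel
      rw [he0]
      have e1 : ‖a - c'‖ = dist a c' := (dist_eq_norm _ _).symm
      have e2 : ‖x - c‖ = dist x c := (dist_eq_norm _ _).symm
      have h3 := norm_sub_le (a - c') (x - c)
      linarith
    have hE : dist x a - 2 * zetan m ≤ ‖c' - c‖ := by
      have h3 : ‖a - x‖ ≤ ‖c' - c‖ + ‖(a - x) - (c' - c)‖ := by
        calc ‖a - x‖ = ‖(c' - c) + ((a - x) - (c' - c))‖ := by congr 1; abel
        _ ≤ _ := norm_add_le _ _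
      have h4 : dist x a = ‖a - x‖ := by rw [dist_eq_norm, norm_sub_rev]
      linarith
    have hrlow' : 1 ≤ ((m:ℝ)+1) * dist x a := by
      rw [div_le_iff₀ hm0] at hrlow
      linarith
    -- 2 ζ ≤ 1/(2(m+1)) and r ≥ 1/(m+1)
    have hζ8 : 2 * zetan m ≤ 1/(2*((m:ℝ)+1)) := by
      rw [le_div_iff₀ (by positivity)]
      nlinarith
    have hr : 1/((m:ℝ)+1) ≤ dist x a := by
      rw [div_le_iff₀ hm0]; linarith
    have hr2 : 1/(2*((m:ℝ)+1)) + 1/(2*((m:ℝ)+1)) ≤ dist x a := by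
      have hm0' : ((m:ℝ)+1) ≠ 0 := ne_of_gt hm0
      have heq : 1/(2*((m:ℝ)+1)) + 1/(2*((m:ℝ)+1)) = 1/((m:ℝ)+1) := by
        field_simp
        norm_num
      rw [heq]; exact hr
    linarith
  -- Lagrange step
  have hnorm : ‖y - x‖ = dist x y := by rw [dist_eq_norm, norm_sub_rev]
  have hlag := lagrange (y - x) (c' - c)
  have hEnn : (0:ℝ) ≤ ‖c' - c‖ := norm_nonneg _
  set θ := (epsn m)^2/2 with hθdef
  have hθpos : 0 < θ := by positivity
  have hθ1 : θ ≤ 1/2 := by rw [hθdef]; linarith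
  have hsq : (θ * (dist x y * ‖c' - c‖))^2 ≤ ⟪y - x, rot (c' - c)⟫^2 := by
    have hup : ⟪y - x, c' - c⟫^2 ≤ ((1 - θ) * (dist x y * ‖c' - c‖))^2 := by
      have h0 : (0:ℝ) ≤ (1 - θ) * (dist x y * ‖c' - c‖) := by
        apply mul_nonneg (by linarith) (by positivity)
      nlinarith [abs_nonneg ⟪y - x, c' - c⟫, sq_abs ⟪y - x, c' - c⟫]
    have hexpand : ⟪y - x, rot (c' - c)⟫^2 =
        (dist x y)^2 * ‖c' - c‖^2 - ⟪y - x, c' - c⟫^2 := by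
      rw [← hnorm]; linarith [hlag]
    rw [hexpand]
    have hprod : (0:ℝ) ≤ (dist x y * ‖c' - c‖)^2 := sq_nonneg _
    nlinarith [sq_nonneg (dist x y * ‖c' - c‖), hθpos.le, hθ1]
  have habs2 : θ * (dist x y * ‖c' - c‖) ≤ |⟪y - x, rot (c' - c)⟫| := by
    have h0 : (0:ℝ) ≤ θ * (dist x y * ‖c' - c‖) := by positivity
    nlinarith [abs_nonneg ⟪y - x, rot (c' - c)⟫, sq_abs ⟪y - x, rot (c' - c)⟫]
  -- conclude
  have hflip2 : |⟪x - y, rot (c' - c)⟫| = |⟪y - x, rot (c' - c)⟫| := by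
    rw [← neg_sub y x, inner_neg_left, abs_neg]
  rw [hflip2]
  have hlow : θ * (dist x y * (1/(2*((m:ℝ)+1)))) ≤ θ * (dist x y * ‖c' - c‖) := by
    apply mul_le_mul_of_nonneg_left _ hθpos.le
    exact mul_le_mul_of_nonneg_left hee dist_nonneg
  have hcoef : θ * (dist x y * (1/(2*((m:ℝ)+1)))) = dist x y / (4*(m+1)/(epsn m)^2) := by
    rw [hθdef]; field_simp; ring
  have hfinal : dist x y / (4*(m+1)/(epsn m)^2) ≤ |⟪y - x, rot (c' - c)⟫| := by
    rw [← hcoef]; linarith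
  rw [div_le_iff₀ (by positivity : (0:ℝ) < 4*(m+1)/(epsn m)^2)] at hfinal
  linarith [hfinal]

lemma piece_dimH {A B : Set Pl} (hBc : IsClosed B) (hB : B.Nonempty)
    (m : ℕ) (c c' : Pl) : dimH (piece A B m c c') ≤ 1 := by
  apply dimH_le_one_of_antilip (fun z => ⟪z, rot (c' - c)⟫)
    (Real.toNNReal (4*(m+1)/(epsn m)^2))
  intro x hx y hy
  have hcoe : ((Real.toNNReal (4*(m+1)/(epsn m)^2)):ℝ) = 4*(m+1)/(epsn m)^2 :=
    Real.coe_toNNReal _ (by positivity)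
  rw [hcoe, Real.dist_eq]
  show dist x y ≤ 4*(m+1)/(epsn m)^2 * |⟪x, rot (c' - c)⟫ - ⟪y, rot (c' - c)⟫|
  rw [← inner_sub_left]
  exact piece_chord hBc hB m c c' hx hy

lemma piece_cover {A B : Set Pl} (hAc : IsClosed A) (hBc : IsClosed B)
    (hA : A.Nonempty) (hB : B.Nonempty) (hAB : Disjoint A B)
    {D : Set Pl} (hD : Dense D) :
    equidistantSet A B ⊆ ⋃ (m : ℕ), ⋃ (c ∈ D), ⋃ (c' ∈ D), piece A B m c c' := by
  intro x hx
  have hxE : infDist x A = infDist x B := hx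
  obtain ⟨a, haA, hxa⟩ := hAc.exists_infDist_eq_dist hA x
  have hxB' : infDist x B = dist x a := by rw [← hxE]; exact hxa
  have hxnA : x ∉ A := by
    intro hmem
    have h0 : infDist x A = 0 := infDist_zero_of_mem hmem
    have h1 : x ∈ B := (hBc.mem_iff_infDist_zero hB).mpr (by rw [← hxE]; exact h0)
    exact (disjoint_left.mp hAB hmem) h1
  have hrpos : 0 < dist x a := by
    rw [← hxa]
    rcases (infDist_nonneg (s := A) (x := x)).lt_or_eq with h | h
    · exact h
    · exact absurd ((hAc.mem_iff_infDist_zero hA).mpr h.symm) hxnA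
  have hanB : a ∉ B := disjoint_left.mp hAB haA
  have hρpos : 0 < infDist a B := (hBc.notMem_iff_infDist_pos hB).mp hanB
  obtain ⟨n, hn⟩ := exists_nat_ge (max (dist x a) (max (1/(dist x a)) (1/(infDist a B))))
  have hn1 : dist x a ≤ (n:ℝ)+1 := by
    have := le_max_left (dist x a) (max (1/(dist x a)) (1/(infDist a B)))
    linarith [this.trans hn]
  have hn2 : 1/((n:ℝ)+1) ≤ dist x a := by
    have h1 : 1/(dist x a) ≤ (n:ℝ)+1 := by
      have := (le_max_left (1/(dist x a)) (1/(infDist a B))).trans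
        (le_max_right (dist x a) _)
      linarith [this.trans hn]
    rw [div_le_iff₀ hrpos] at h1
    rw [div_le_iff₀ (by positivity : (0:ℝ) < (n:ℝ)+1)]
    linarith
  have hn3 : ∀ b ∈ B, 1/((n:ℝ)+1) ≤ dist a b := by
    intro b hbB
    have h1 : 1/(infDist a B) ≤ (n:ℝ)+1 := by
      have := (le_max_right (1/(dist x a)) (1/(infDist a B))).trans
        (le_max_right (dist x a) _)
      linarith [this.trans hn]
    rw [div_le_iff₀ hρpos] at h1
    have h2 : 1/((n:ℝ)+1) ≤ infDist a B := by
      rw [div_le_iff₀ (by positivity : (0:ℝ) < (n:ℝ)+1)]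
      linarith
    exact h2.trans (infDist_le_dist_of_mem hbB)
  obtain ⟨c, hcD, hcd⟩ := hD.exists_dist_lt x (zetan_pos n)
  obtain ⟨c', hc'D, hc'd⟩ := hD.exists_dist_lt a (zetan_pos n)
  refine mem_iUnion.2 ⟨n, ?_⟩
  refine mem_biUnion hcD ?_
  refine mem_biUnion hc'D ?_
  exact ⟨a, haA, hxa, hxB', hn2, hn1, hn3, hcd, hc'd⟩

lemma dimH_upper {A B : Set Pl} (hA : A.Nonempty) (hB : B.Nonempty)
    (hAB : Disjoint A B) (hAc : IsClosed A) (hBc : IsClosed B) :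
    dimH (equidistantSet A B) ≤ 1 := by
  obtain ⟨D, hDc, hDd⟩ := TopologicalSpace.exists_countable_dense Pl
  calc dimH (equidistantSet A B)
      ≤ dimH (⋃ (m : ℕ), ⋃ (c ∈ D), ⋃ (c' ∈ D), piece A B m c c') :=
        dimH_mono (piece_cover hAc hBc hA hB hAB hDd)
  _ ≤ 1 := by
      rw [dimH_iUnion]
      apply iSup_le; intro m
      rw [dimH_bUnion hDc]
      apply iSup₂_le; intro c _
      rw [dimH_bUnion hDc]
      apply iSup₂_le; intro c' _
      exact piece_dimH hBc hB m c c'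

lemma dimH_lower {A B : Set Pl} (hA : A.Nonempty) (hB : B.Nonempty)
    (hAB : Disjoint A B) (hAc : IsClosed A) (hBc : IsClosed B) :
    1 ≤ dimH (equidistantSet A B) := by
  obtain ⟨a, haA⟩ := hA
  obtain ⟨b, hbB⟩ := hB
  have hanB : a ∉ B := disjoint_left.mp hAB haA
  have hbnA : b ∉ A := disjoint_right.mp hAB hbB
  have hab : a ≠ b := fun h => hanB (h ▸ hbB)
  have hraB : 0 < infDist a B := (hBc.notMem_iff_infDist_pos ⟨b, hbB⟩).mp hanB
  have hrbA : 0 < infDist b A := (hAc.notMem_iff_infDist_pos ⟨a, haA⟩).mp hbnA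
  set δ := min (infDist a B) (infDist b A) / 4 with hδdef
  have hδpos : 0 < δ := by
    have := lt_min hraB hrbA
    rw [hδdef]; linarith
  set e := b - a with hedef
  have hepos : 0 < ‖e‖ := by
    rw [norm_pos_iff, hedef, sub_ne_zero]
    exact hab.symm
  set v := rot e with hvdef
  have hvnorm : ‖v‖ = ‖e‖ := rot_norm e
  set f : Pl → ℝ := fun z => ⟪z, v⟫ with hfdef
  -- sign conditions
  have hsignA : ∀ z : Pl, dist z a ≤ δ → infDist z A < infDist z B := by
    intro z hz
    have h1 : infDist z A ≤ δ := le_trans (infDist_le_dist_of_mem haA) hz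
    have h2 : infDist a B ≤ infDist z B + dist a z := infDist_le_infDist_add_dist
    have h3 : dist a z ≤ δ := by rwa [dist_comm]
    have h4 : 4*δ ≤ infDist a B := by
      have := min_le_left (infDist a B) (infDist b A)
      rw [hδdef]; linarith
    linarith
  have hsignB : ∀ z : Pl, dist z b ≤ δ → infDist z B < infDist z A := by
    intro z hz
    have h1 : infDist z B ≤ δ := le_trans (infDist_le_dist_of_mem hbB) hz
    have h2 : infDist b A ≤ infDist z A + dist b z := infDist_le_infDist_add_dist
    have h3 : dist b z ≤ δ := by rwa [dist_comm]
    have h4 : 4*δ ≤ infDist b A := by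
      have := min_le_right (infDist a B) (infDist b A)
      rw [hδdef]; linarith
    linarith
  -- interval inside the image
  have hIcc : Icc (f a) (f a + δ * ‖e‖) ⊆ f '' (equidistantSet A B) := by
    rintro ξ ⟨hξ1, hξ2⟩
    set s := (ξ - f a) / ‖e‖ with hsdef
    have hs0 : 0 ≤ s := div_nonneg (by linarith) hepos.le
    have hsδ : s ≤ δ := by
      rw [hsdef, div_le_iff₀ hepos]; linarith
    set u := ‖e‖⁻¹ • v with hudef
    have hunorm : ‖s • u‖ = s := by
      rw [hudef, norm_smul, norm_smul, norm_inv, norm_norm, hvnorm,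
        inv_mul_cancel₀ hepos.ne', mul_one, Real.norm_eq_abs, abs_of_nonneg hs0]
    set g : ℝ → Pl := fun t => (a + s • u) + t • e with hgdef
    have hgcont : Continuous g := by
      apply Continuous.add continuous_const
      exact (continuous_id.smul continuous_const)
    have hg0 : dist (g 0) a ≤ δ := by
      have : g 0 = a + s • u := by rw [hgdef]; simp
      rw [this, dist_eq_norm]
      have : a + s • u - a = s • u := by abel
      rw [this, hunorm]; exact hsδ
    have hg1 : dist (g 1) b ≤ δ := by
      have : g 1 = b + s • u := by rw [hgdef, hedef]; simp; abel
      rw [this, dist_eq_norm]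
      have : b + s • u - b = s • u := by abel
      rw [this, hunorm]; exact hsδ
    set φ : ℝ → ℝ := fun t => infDist (g t) A - infDist (g t) B with hφdef
    have hφcont : ContinuousOn φ (Icc 0 1) := by
      apply Continuous.continuousOn
      exact ((continuous_infDist_pt A).comp hgcont).sub
        ((continuous_infDist_pt B).comp hgcont)
    have hφ0 : φ 0 < 0 := by
      have := hsignA (g 0) hg0
      rw [hφdef]; simpa using sub_neg.mpr this
    have hφ1 : 0 < φ 1 := by
      have := hsignB (g 1) hg1
      rw [hφdef]; simpa using sub_pos.mpr this
    have hmem : (0:ℝ) ∈ Icc (φ 0) (φ 1) := ⟨hφ0.le, hφ1.le⟩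
    obtain ⟨t, ht01, hφt⟩ := intermediate_value_Icc zero_le_one hφcont hmem
    have hpE : g t ∈ equidistantSet A B := by
      have : infDist (g t) A = infDist (g t) B := by
        have h5 : infDist (g t) A - infDist (g t) B = 0 := hφt
        linarith
      exact this
    refine ⟨g t, hpE, ?_⟩
    -- compute f (g t)
    have hfg : f (g t) = ξ := by
      have h6 : ⟪v, v⟫ = ‖e‖^2 := by
        rw [real_inner_self_eq_norm_sq, hvnorm]
      have h7 : ⟪e, v⟫ = 0 := rot_orth e
      have h8 : s * ‖e‖ = ξ - f a := by
        rw [hsdef, div_mul_cancel₀ _ hepos.ne']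
      have h9 : ‖e‖⁻¹ * ‖e‖^2 = ‖e‖ := by
        field_simp
      have h10 : f a = ⟪a, v⟫ := rfl
      show ⟪(a + s • u) + t • e, v⟫ = ξ
      simp only [inner_add_left, real_inner_smul_left, hudef, h6, h7, mul_zero, add_zero]
      rw [h9]
      linarith
    exact hfg
  -- conclude
  have hflip : LipschitzWith ‖v‖₊ f := by
    apply LipschitzWith.of_dist_le_mul
    intro z w
    rw [Real.dist_eq, hfdef]
    show |⟪z, v⟫ - ⟪w, v⟫| ≤ (‖v‖₊ : ℝ) * dist z w
    rw [← inner_sub_left, coe_nnnorm, dist_eq_norm]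
    calc |⟪z - w, v⟫| ≤ ‖z - w‖ * ‖v‖ := abs_real_inner_le_norm _ _
    _ = ‖v‖ * ‖z - w‖ := mul_comm _ _
  have hIccdim : dimH (Icc (f a) (f a + δ * ‖e‖)) = 1 := by
    rw [Real.dimH_of_nonempty_interior]
    · simp
    · rw [interior_Icc]
      exact nonempty_Ioo.mpr (by nlinarith)
  calc (1:ℝ≥0∞) = dimH (Icc (f a) (f a + δ * ‖e‖)) := hIccdim.symm
  _ ≤ dimH (f '' (equidistantSet A B)) := dimH_mono hIcc
  _ ≤ dimH (equidistantSet A B) := hflip.dimH_image_le _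


/-- If `A` and `B` are nonempty, disjoint, closed subsets of the Euclidean plane, then
the Hausdorff dimension of the equidistant set `E(A,B)` is exactly `1`. -/
theorem dimH_equidistantSet
    (A B : Set (EuclideanSpace ℝ (Fin 2)))
    (hA : A.Nonempty) (hB : B.Nonempty) (hAB : Disjoint A B)
    (hAc : IsClosed A) (hBc : IsClosed B) :
    dimH (equidistantSet A B) = 1 := by
  exact le_antisymm (dimH_upper hA hB hAB hAc hBc) (dimH_lower hA hB hAB hAc hBc)
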